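/- Let (X,F) be a symmetric n-ary band presented as a strong n-ary semilattice [Y,(X_α,F_α),φ_{α,β}] of n-ary extensions of abelian groups whose exponents divide n−1 (i.e., (Y,∧) is a semilattice, each F_α on X_α is the n-ary extension of an abelian group operation *_α of exponent dividing n−1, the maps φ_{α,β} : X_α → X_β for α ≥ β satisfy φ_{α,α} = id, φ_{β,γ} ∘ φ_{α,β} = φ_{α,γ} for α ≥ β ≥ γ, each φ_{α,β} is a homomorphism of n-ary semigroups, and F(x₁,…,xₙ) = F_α(φ_{α₁,α}(x₁),…,φ_{αₙ,α}(xₙ)) for x_i ∈ X_{α_i} with α = α₁ ∧ ⋯ ∧ αₙ). Then F is reducible to an associative binary operation G : X² → X (F = G^{n−1}) if and only if there exists a map e : Y → X such that e(α) ∈ X_α for every α ∈ Y and φ_{α,β}(e(α)) = e(β) whenever α ≥ β. -/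

import Mathlib

namespace NaryBand

variable {X : Type*}

/-- Replace the window of length `n` starting at position `i` (0-based) of the
`(2*n-1)`-tuple `x` by the value of `F` on that window. -/
def contract {n : ℕ} (F : (Fin n → X) → X) (i : ℕ) (hn : 2 ≤ n) (hi : i ≤ n - 1)
    (x : Fin (2 * n - 1) → X) : Fin n → X :=
  fun j =>
    if _h1 : (j : ℕ) < i then x ⟨(j : ℕ), by have := j.isLt; omega⟩
    else if _h2 : (j : ℕ) = i then
      F (fun k => x ⟨i + (k : ℕ), by have := k.isLt; omega⟩)
    else x ⟨(j : ℕ) + n - 1, by have := j.isLt; omega⟩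

/-- `F` is an associative `n`-ary operation. -/
def NAssoc {n : ℕ} (hn : 2 ≤ n) (F : (Fin n → X) → X) : Prop :=
  ∀ (i : ℕ) (hi : i + 1 ≤ n - 1) (x : Fin (2 * n - 1) → X),
    F (contract F i hn (by omega) x) = F (contract F (i + 1) hn (by omega) x)

/-- `F` is a symmetric `n`-ary operation. -/
def NSym {n : ℕ} (F : (Fin n → X) → X) : Prop :=
  ∀ (σ : Equiv.Perm (Fin n)) (x : Fin n → X), F (x ∘ σ) = F x

/-- `F` is an idempotent `n`-ary operation. -/
def NIdem {n : ℕ} (F : (Fin n → X) → X) : Prop :=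
  ∀ x : X, F (fun _ => x) = x

/-- The associated binary operation `B(x,y) = F(x,…,x,y)` (with `n-1` copies of `x`). -/
def assocB {n : ℕ} (F : (Fin n → X) → X) (x y : X) : X :=
  F (fun j => if (j : ℕ) < n - 1 then x else y)

/-- The map `ℓ_x : y ↦ B(x,y)`. -/
def ell {n : ℕ} (F : (Fin n → X) → X) (x : X) : X → X :=
  fun y => assocB F x y

/-- The `n`-ary extension `G^{n-1}(x₁,…,xₙ) = G(x₁, G(x₂, …, G(x_{n-1}, xₙ)…))`
of a binary operation `G`. -/
def nExt {n : ℕ} (hn : 1 ≤ n) (G : X → X → X) (x : Fin n → X) : X :=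
  (List.ofFn (fun i : Fin (n - 1) => x ⟨(i : ℕ), by have := i.isLt; omega⟩)).foldr G
    (x ⟨n - 1, by omega⟩)

/-- The relation `σ`: `x σ y` iff `B(x,y) = y` and `B(y,x) = x`. -/
def sigmaRel {n : ℕ} (F : (Fin n → X) → X) (x y : X) : Prop :=
  assocB F x y = y ∧ assocB F y x = x

/-- `(A, mul)` is an abelian group with identity `e` and inversion `inv`. -/
def IsAbelianGroup {A : Type*} (mul : A → A → A) (e : A) (inv : A → A) : Prop :=
  (∀ a b c, mul (mul a b) c = mul a (mul b c)) ∧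
  (∀ a b, mul a b = mul b a) ∧
  (∀ a, mul e a = a) ∧
  (∀ a, mul (inv a) a = e)

/-- `k`-fold product `a * ⋯ * a` with respect to `mul` (with `powMul mul e 0 a = e`). -/
def powMul {A : Type*} (mul : A → A → A) (e : A) : ℕ → A → A
  | 0, _ => e
  | k + 1, a => mul a (powMul mul e k a)

end NaryBand

open NaryBand

namespace NaryBandAux

def mkCommGroup {A : Type*} (mul : A → A → A) (e : A) (inv : A → A)
    (h : IsAbelianGroup mul e inv) : CommGroup A where
  mul := mul
  one := e
  inv := inv
  div := fun a b => mul a (inv b)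
  div_eq_mul_inv := fun _ _ => rfl
  mul_assoc := h.1
  mul_comm := h.2.1
  one_mul := h.2.2.1
  mul_one := fun a => by show mul a e = a; rw [h.2.1]; exact h.2.2.1 a
  inv_mul_cancel := h.2.2.2

theorem nExt_eq_foldr {T : Type*} {m : ℕ} (h : 1 ≤ m + 2) (G : T → T → T)
    (x : Fin (m + 2) → T) :
    nExt h G x =
      (List.ofFn (fun i : Fin (m + 1) => x ⟨(i : ℕ), by omega⟩)).foldr G
        (x ⟨m + 1, by omega⟩) := rfl

theorem foldr_tuple1 {T : Type*} {m : ℕ} (h : 1 ≤ m + 2) (G : T → T → T) (x y : T) :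
    nExt h G (fun j : Fin (m + 2) => if (j : ℕ) < m + 1 then x else y)
      = (List.replicate (m + 1) x).foldr G y := by
  show (List.ofFn (fun i : Fin (m + 1) =>
      if ((⟨(i : ℕ), by omega⟩ : Fin (m + 2)) : ℕ) < m + 1 then x else y)).foldr G
      (if ((⟨m + 1, by omega⟩ : Fin (m + 2)) : ℕ) < m + 1 then x else y)
      = (List.replicate (m + 1) x).foldr G y
  have h1 : (fun i : Fin (m + 1) =>
      if ((⟨(i : ℕ), by omega⟩ : Fin (m + 2)) : ℕ) < m + 1 then x else y) = fun _ => x := by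
    funext i; simp [i.isLt]
  rw [h1, List.ofFn_const]
  simp

theorem foldr_tuple2 {T : Type*} {m : ℕ} (h : 1 ≤ m + 2) (G : T → T → T) (x y : T) :
    nExt h G (fun j : Fin (m + 2) => if (j : ℕ) < 1 then y else x)
      = G y ((List.replicate m x).foldr G x) := by
  show (List.ofFn (fun i : Fin (m + 1) =>
      if ((⟨(i : ℕ), by omega⟩ : Fin (m + 2)) : ℕ) < 1 then y else x)).foldr G
      (if ((⟨m + 1, by omega⟩ : Fin (m + 2)) : ℕ) < 1 then y else x)
      = G y ((List.replicate m x).foldr G x)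
  rw [List.ofFn_succ]
  have h1 : (fun i : Fin m =>
      if (((⟨((i.succ : Fin (m+1)) : ℕ), by omega⟩ : Fin (m + 2))) : ℕ) < 1 then y else x)
      = fun _ => x := by
    funext i; simp
  rw [h1, List.ofFn_const]
  simp

theorem foldr_tupleE {T : Type*} {m : ℕ} (h : 1 ≤ m + 2) (G : T → T → T) (a b c : T) :
    nExt h G (fun j : Fin (m + 2) => if (j : ℕ) < 1 then a else if (j : ℕ) = m + 1 then b else c)
      = G a ((List.replicate m c).foldr G b) := by
  show (List.ofFn (fun i : Fin (m + 1) =>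
      if ((⟨(i : ℕ), by omega⟩ : Fin (m + 2)) : ℕ) < 1 then a
      else if ((⟨(i : ℕ), by omega⟩ : Fin (m + 2)) : ℕ) = m + 1 then b else c)).foldr G
      (if ((⟨m + 1, by omega⟩ : Fin (m + 2)) : ℕ) < 1 then a
       else if ((⟨m + 1, by omega⟩ : Fin (m + 2)) : ℕ) = m + 1 then b else c)
      = G a ((List.replicate m c).foldr G b)
  rw [List.ofFn_succ]
  have h1 : (fun i : Fin m =>
      if (((⟨((i.succ : Fin (m+1)) : ℕ), by omega⟩ : Fin (m + 2))) : ℕ) < 1 then a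
      else if (((⟨((i.succ : Fin (m+1)) : ℕ), by omega⟩ : Fin (m + 2))) : ℕ) = m + 1 then b else c)
      = fun _ => c := by
    funext i
    have h2 : (i : ℕ) + 1 ≠ m + 1 := by have := i.isLt; omega
    simp [h2, i.isLt.ne]
  rw [h1, List.ofFn_const]
  simp

theorem ofFn_map {k : ℕ} {T S : Type*} (g : T → S) (f : Fin k → T) :
    List.ofFn (fun i => g (f i)) = (List.ofFn f).map g := by rw [List.map_ofFn]; rfl

end NaryBandAux

/-- A symmetric `n`-ary band presented as a strong `n`-ary
semilattice `[Y,(X_α,F_α),φ_{α,β}]` of `n`-ary extensions of abelian groups whose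
exponents divide `n-1` is reducible to an associative binary operation
(`F = G^{n-1}`) if and only if there is a map `e` choosing `e(α) ∈ X_α` with
`φ_{α,β}(e(α)) = e(β)` whenever `α ≥ β`. -/
theorem stmt_19 {Y : Type*} {Xf : Y → Type*} {n : ℕ} (hn : 2 ≤ n)
    (meet : Y → Y → Y)
    (hassoc : ∀ a b c, meet (meet a b) c = meet a (meet b c))
    (hcomm : ∀ a b, meet a b = meet b a)
    (hidem : ∀ a, meet a a = a)
    (hne : ∀ α, Nonempty (Xf α))
    (mulA : ∀ α, Xf α → Xf α → Xf α) (eA : ∀ α, Xf α) (invA : ∀ α, Xf α → Xf α)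
    (hgrp : ∀ α, IsAbelianGroup (mulA α) (eA α) (invA α))
    (hexp : ∀ α (a : Xf α), powMul (mulA α) (eA α) (n - 1) a = eA α)
    (Fa : ∀ α, (Fin n → Xf α) → Xf α)
    (hFaDef : ∀ α, Fa α = nExt (show 1 ≤ n by omega) (mulA α))
    (φ : ∀ α β, Xf α → Xf β)
    (hid : ∀ α, φ α α = id)
    (hcomp : ∀ α β γ, meet α β = β → meet β γ = γ → φ β γ ∘ φ α β = φ α γ)
    (hhom : ∀ α β, meet α β = β → ∀ xs : Fin n → Xf α,
      φ α β (Fa α xs) = Fa β (fun i => φ α β (xs i)))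
    (F : (Fin n → Σ α, Xf α) → Σ α, Xf α)
    (hFdef : ∀ xs : Fin n → Σ α, Xf α,
      F xs = ⟨nExt (show 1 ≤ n by omega) meet (fun i => (xs i).1),
        Fa _ (fun i => φ (xs i).1 _ (xs i).2)⟩) :
    (∃ G : (Σ α, Xf α) → (Σ α, Xf α) → (Σ α, Xf α),
      (∀ a b c, G (G a b) c = G a (G b c)) ∧
      F = nExt (show 1 ≤ n by omega) G) ↔
    (∃ e : ∀ α, Xf α, ∀ α β, meet α β = β → φ α β (e α) = e β) := by
  obtain ⟨m, rfl⟩ : ∃ m, n = m + 2 := ⟨n - 2, by omega⟩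
  letI instCG : ∀ γ, CommGroup (Xf γ) := fun γ => NaryBandAux.mkCommGroup _ _ _ (hgrp γ)
  have hmul : ∀ γ (a b : Xf γ), mulA γ a b = a * b := fun _ _ _ => rfl
  have hpow : ∀ γ (k : ℕ) (a : Xf γ), powMul (mulA γ) (eA γ) k a = a ^ k := by
    intro γ k a
    induction k with
    | zero => show eA γ = a ^ 0; rw [pow_zero]; rfl
    | succ k ih => show mulA γ a _ = a ^ (k+1); rw [ih, hmul, ← pow_succ']
  have hexp1 : ∀ γ (a : Xf γ), a ^ (m + 1) = 1 := by
    intro γ a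
    have h := hexp γ a
    rw [show m + 2 - 1 = m + 1 from rfl, hpow] at h
    exact h
  have hfoldrep : ∀ γ (a z : Xf γ) (k : ℕ),
      List.foldr (mulA γ) z (List.replicate k a) = a ^ k * z := by
    intro γ a z k
    induction k with
    | zero => simp
    | succ k ih =>
      rw [List.replicate_succ, List.foldr_cons, ih, hmul, ← mul_assoc, ← pow_succ']
  have mA : ∀ a b, meet a (meet a b) = meet a b := by
    intro a b; rw [← hassoc, hidem]
  have mB : ∀ a b, meet b (meet a b) = meet a b := by
    intro a b; rw [hcomm a b, ← hassoc, hidem]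
  have mC : ∀ a b c, meet a b = b → meet b c = c → meet a c = c := by
    intro a b c h1 h2; rw [← h2, ← hassoc, h1]
  have mfold0 : ∀ (a : Y) (k : ℕ), List.foldr meet a (List.replicate k a) = a := by
    intro a k; induction k with
    | zero => rfl
    | succ k ih => rw [List.replicate_succ, List.foldr_cons, ih, hidem]
  have mfold1 : ∀ (a z : Y) (k : ℕ), List.foldr meet z (List.replicate (k + 1) a) = meet a z := by
    intro a z k; induction k with
    | zero => rfl
    | succ k ih => rw [List.replicate_succ, List.foldr_cons, ih, mA]
  have pushEq : ∀ (s : Σ α, Xf α) (γ : Y), γ = s.1 →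
      (⟨γ, φ s.1 γ s.2⟩ : Σ α, Xf α) = s := by
    rintro ⟨δ, d⟩ γ h
    subst h
    show (⟨γ, φ γ γ d⟩ : Σ α, Xf α) = ⟨γ, d⟩
    rw [hid]
    rfl
  have sigSnd : ∀ (γ : Y) (u v : Xf γ), (⟨γ, u⟩ : Σ α, Xf α) = ⟨γ, v⟩ → u = v := by
    intro γ u v h
    injection h
  constructor
  · rintro ⟨G, hGa, hFG⟩
    have hGF : ∀ t : Fin (m + 2) → Σ α, Xf α, nExt (by omega) G t = F t := by
      intro t; rw [hFG]
    -- evaluate F on the tuple (x,...,x,y)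
    have hF1 : ∀ x y : Σ α, Xf α,
        F (fun j : Fin (m + 2) => if (j : ℕ) < m + 1 then x else y)
          = ⟨meet x.1 y.1, φ y.1 (meet x.1 y.1) y.2⟩ := by
      intro x y
      rw [hFdef]
      have hfst : (fun i : Fin (m + 2) =>
          ((fun j : Fin (m + 2) => if (j : ℕ) < m + 1 then x else y) i).1)
          = fun i : Fin (m + 2) => if (i : ℕ) < m + 1 then x.1 else y.1 := by
        funext i
        dsimp only
        by_cases h : (i : ℕ) < m + 1
        · rw [if_pos h, if_pos h]
        · rw [if_neg h, if_neg h]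
      have hMl : nExt (show 1 ≤ m + 2 by omega) meet (fun i : Fin (m + 2) =>
          ((fun j : Fin (m + 2) => if (j : ℕ) < m + 1 then x else y) i).1) = meet x.1 y.1 := by
        rw [hfst, NaryBandAux.foldr_tuple1, mfold1]
      rw [hMl]
      have hsnd : (fun i : Fin (m + 2) =>
          φ ((fun j : Fin (m + 2) => if (j : ℕ) < m + 1 then x else y) i).1 (meet x.1 y.1)
            ((fun j : Fin (m + 2) => if (j : ℕ) < m + 1 then x else y) i).2)
          = fun i : Fin (m + 2) => if (i : ℕ) < m + 1 then φ x.1 (meet x.1 y.1) x.2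
              else φ y.1 (meet x.1 y.1) y.2 := by
        funext i
        dsimp only
        by_cases h : (i : ℕ) < m + 1
        · rw [if_pos h, if_pos h]
        · rw [if_neg h, if_neg h]
      rw [hsnd, hFaDef, NaryBandAux.foldr_tuple1, hfoldrep, hexp1, one_mul]
    -- evaluate F on the tuple (y,x,...,x)
    have hF2 : ∀ x y : Σ α, Xf α,
        F (fun j : Fin (m + 2) => if (j : ℕ) < 1 then y else x)
          = ⟨meet y.1 x.1, φ y.1 (meet y.1 x.1) y.2⟩ := by
      intro x y
      rw [hFdef]
      have hfst : (fun i : Fin (m + 2) =>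
          ((fun j : Fin (m + 2) => if (j : ℕ) < 1 then y else x) i).1)
          = fun i : Fin (m + 2) => if (i : ℕ) < 1 then y.1 else x.1 := by
        funext i
        dsimp only
        by_cases h : (i : ℕ) < 1
        · rw [if_pos h, if_pos h]
        · rw [if_neg h, if_neg h]
      have hMl : nExt (show 1 ≤ m + 2 by omega) meet (fun i : Fin (m + 2) =>
          ((fun j : Fin (m + 2) => if (j : ℕ) < 1 then y else x) i).1) = meet y.1 x.1 := by
        rw [hfst, NaryBandAux.foldr_tuple2, mfold0]
      rw [hMl]
      have hsnd : (fun i : Fin (m + 2) =>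
          φ ((fun j : Fin (m + 2) => if (j : ℕ) < 1 then y else x) i).1 (meet y.1 x.1)
            ((fun j : Fin (m + 2) => if (j : ℕ) < 1 then y else x) i).2)
          = fun i : Fin (m + 2) => if (i : ℕ) < 1 then φ y.1 (meet y.1 x.1) y.2
              else φ x.1 (meet y.1 x.1) x.2 := by
        funext i
        dsimp only
        by_cases h : (i : ℕ) < 1
        · rw [if_pos h, if_pos h]
        · rw [if_neg h, if_neg h]
      rw [hsnd, hFaDef, NaryBandAux.foldr_tuple2, hfoldrep, hmul]
      congr 1
      rw [← pow_succ, hexp1, mul_one]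
    -- iterate form of nExt G on these tuples
    have hGrep : ∀ (x z : Σ α, Xf α) (k : ℕ),
        List.foldr G z (List.replicate k x) = (fun w => G x w)^[k] z := by
      intro x z k
      induction k with
      | zero => rfl
      | succ k ih =>
        rw [List.replicate_succ, List.foldr_cons, ih]
        exact (Function.iterate_succ_apply' _ k z).symm
    have E1 : ∀ x y : Σ α, Xf α, (fun w => G x w)^[m + 1] y
        = ⟨meet x.1 y.1, φ y.1 (meet x.1 y.1) y.2⟩ := by
      intro x y
      have h := hGF (fun j : Fin (m + 2) => if (j : ℕ) < m + 1 then x else y)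
      rw [hF1 x y, NaryBandAux.foldr_tuple1, hGrep] at h
      exact h
    have E2 : ∀ x y : Σ α, Xf α, G y ((fun w => G x w)^[m] x)
        = ⟨meet y.1 x.1, φ y.1 (meet y.1 x.1) y.2⟩ := by
      intro x y
      have h := hGF (fun j : Fin (m + 2) => if (j : ℕ) < 1 then y else x)
      rw [hF2 x y, NaryBandAux.foldr_tuple2, hGrep] at h
      exact h
    -- p x
    set p : (Σ α, Xf α) → (Σ α, Xf α) := fun x => (fun w => G x w)^[m] x with hp
    have iterGp : ∀ (x : Σ α, Xf α) (k : ℕ) (y : Σ α, Xf α),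
        (fun w => G x w)^[k + 1] y = G ((fun w => G x w)^[k] x) y := by
      intro x k
      induction k with
      | zero => intro y; rfl
      | succ k ih =>
        intro y
        have h2 : (fun w => G x w)^[k + 1 + 1] y = G x ((fun w => G x w)^[k+1] y) :=
          Function.iterate_succ_apply' _ _ _
        have h3 : (fun w => G x w)^[k + 1] x = G x ((fun w => G x w)^[k] x) :=
          Function.iterate_succ_apply' _ _ _
        rw [h2, ih y, h3, hGa]
    have E1' : ∀ x y : Σ α, Xf α, G (p x) y
        = ⟨meet x.1 y.1, φ y.1 (meet x.1 y.1) y.2⟩ := by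
      intro x y
      rw [hp]
      rw [← iterGp]
      exact E1 x y
    have hxfix : ∀ x : Σ α, Xf α, (fun w => G x w)^[m + 1] x = x := by
      intro x
      rw [E1 x x]
      exact pushEq x (meet x.1 x.1) (hidem x.1)
    have hppx : ∀ x : Σ α, Xf α, (fun w => G x w)^[m + 1] (p x) = p x := by
      intro x
      rw [hp]
      show (fun w => G x w)^[m+1] ((fun w => G x w)^[m] x) = (fun w => G x w)^[m] x
      rw [← Function.iterate_add_apply, add_comm, Function.iterate_add_apply, hxfix]
    have hkey1 : ∀ x : Σ α, Xf α,
        (⟨meet x.1 (p x).1, φ (p x).1 (meet x.1 (p x).1) (p x).2⟩ : Σ α, Xf α) = p x := by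
      intro x
      rw [← E1 x (p x)]
      exact hppx x
    have hGpp : ∀ x : Σ α, Xf α, G (p x) (p x) = p x := by
      intro x
      rw [E1' x (p x)]
      exact hkey1 x
    have hpp : ∀ x : Σ α, Xf α, p (p x) = p x := by
      intro x
      rw [hp]
      exact Function.iterate_fixed (hGpp x) m
    have hp1 : ∀ x : Σ α, Xf α, (p x).1 = x.1 := by
      intro x
      have h1 := E1' (p x) x
      rw [hpp x, E1' x x] at h1
      have h2 : meet x.1 x.1 = meet (p x).1 x.1 := congrArg Sigma.fst h1
      have h3 : meet x.1 (p x).1 = (p x).1 := congrArg Sigma.fst (hkey1 x)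
      rw [← h3, hcomm, ← h2, hidem]
    have hKEY : ∀ x z : Σ α, Xf α, meet x.1 z.1 = z.1 →
        (⟨meet (p x).1 z.1, φ (p x).1 (meet (p x).1 z.1) (p x).2⟩ : Σ α, Xf α) = p z := by
      intro x z h
      have h1 : G (p x) (p z) = p z := by
        rw [E1' x (p z)]
        refine pushEq (p z) _ ?_
        rw [hp1 z]
        exact h
      rw [← h1, E2 z (p x)]
    -- construct e
    have sigExists : ∀ (s : Σ α, Xf α) (γ : Y), s.1 = γ → ∃ u : Xf γ, s = ⟨γ, u⟩ := by
      rintro ⟨δ, d⟩ γ h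
      dsimp at h
      subst h
      exact ⟨d, rfl⟩
    have sel : ∀ α, Xf α := fun α => (hne α).some
    have hex : ∀ α, ∃ u : Xf α, p ⟨α, sel α⟩ = ⟨α, u⟩ :=
      fun α => sigExists _ _ (hp1 ⟨α, sel α⟩)
    choose e he using hex
    refine ⟨e, ?_⟩
    intro α β hab
    have hk := hKEY ⟨α, sel α⟩ ⟨β, sel β⟩ hab
    rw [he α, he β] at hk
    dsimp at hk
    rw [hab] at hk
    exact sigSnd β _ _ hk
  · rintro ⟨e, he⟩
    have hcm : ∀ γ (c : Xf γ), c ^ m = c⁻¹ := by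
      intro γ c
      refine eq_inv_of_mul_eq_one_left ?_
      rw [← pow_succ, hexp1]
    have FaEval : ∀ γ (a b : Xf γ),
        Fa γ (fun j : Fin (m + 2) =>
            if (j : ℕ) < 1 then a else if (j : ℕ) = m + 1 then b else e γ)
          = a * b * (e γ)⁻¹ := by
      intro γ a b
      rw [hFaDef, NaryBandAux.foldr_tupleE, hmul, hfoldrep, hcm,
        mul_comm (e γ)⁻¹ b, ← mul_assoc]
    have hom' : ∀ α β, meet α β = β → ∀ a b : Xf α,
        φ α β (a * b * (e α)⁻¹) = φ α β a * φ α β b * (e β)⁻¹ := by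
      intro α β hβ a b
      rw [← FaEval α a b, hhom α β hβ, ← FaEval β (φ α β a) (φ α β b)]
      congr 1
      funext i
      by_cases h1 : (i : ℕ) < 1
      · rw [if_pos h1, if_pos h1]
      · rw [if_neg h1, if_neg h1]
        by_cases h2 : (i : ℕ) = m + 1
        · rw [if_pos h2, if_pos h2]
        · rw [if_neg h2, if_neg h2, he α β hβ]
    set G : (Σ α, Xf α) → (Σ α, Xf α) → (Σ α, Xf α) := fun x y => ⟨meet x.1 y.1,
        φ x.1 (meet x.1 y.1) x.2 * φ y.1 (meet x.1 y.1) y.2 * (e (meet x.1 y.1))⁻¹⟩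
      with hGdef
    have hGxy : ∀ x y : Σ α, Xf α, G x y = ⟨meet x.1 y.1,
        φ x.1 (meet x.1 y.1) x.2 * φ y.1 (meet x.1 y.1) y.2 * (e (meet x.1 y.1))⁻¹⟩ :=
      fun x y => by rw [hGdef]
    have hGassoc : ∀ x y z : Σ α, Xf α, G (G x y) z = G x (G y z) := by
      intro x y z
      rw [hGxy x y, hGxy y z, hGxy, hGxy]
      dsimp only
      have hd1 : meet (meet x.1 y.1) (meet (meet x.1 y.1) z.1) = meet (meet x.1 y.1) z.1 :=
        mA _ _
      have hd2 : meet (meet y.1 z.1) (meet x.1 (meet y.1 z.1)) = meet x.1 (meet y.1 z.1) :=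
        mB _ _
      rw [hom' _ _ hd1, hom' _ _ hd2]
      have hc1 : φ (meet x.1 y.1) (meet (meet x.1 y.1) z.1) (φ x.1 (meet x.1 y.1) x.2)
          = φ x.1 (meet (meet x.1 y.1) z.1) x.2 :=
        congrFun (hcomp x.1 (meet x.1 y.1) (meet (meet x.1 y.1) z.1) (mA _ _) hd1) x.2
      have hc2 : φ (meet x.1 y.1) (meet (meet x.1 y.1) z.1) (φ y.1 (meet x.1 y.1) y.2)
          = φ y.1 (meet (meet x.1 y.1) z.1) y.2 :=
        congrFun (hcomp y.1 (meet x.1 y.1) (meet (meet x.1 y.1) z.1) (mB _ _) hd1) y.2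
      have hc3 : φ (meet y.1 z.1) (meet x.1 (meet y.1 z.1)) (φ y.1 (meet y.1 z.1) y.2)
          = φ y.1 (meet x.1 (meet y.1 z.1)) y.2 :=
        congrFun (hcomp y.1 (meet y.1 z.1) (meet x.1 (meet y.1 z.1)) (mA _ _) hd2) y.2
      have hc4 : φ (meet y.1 z.1) (meet x.1 (meet y.1 z.1)) (φ z.1 (meet y.1 z.1) z.2)
          = φ z.1 (meet x.1 (meet y.1 z.1)) z.2 :=
        congrFun (hcomp z.1 (meet y.1 z.1) (meet x.1 (meet y.1 z.1)) (mB _ _) hd2) z.2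
      rw [hc1, hc2, hc3, hc4, hassoc x.1 y.1 z.1]
      refine congrArg (Sigma.mk _) ?_
      simp only [mul_assoc, mul_comm, mul_left_comm]
    have sigEq2 : ∀ (s : Σ α, Xf α) (γ : Y) (v : Xf γ), s.1 = γ →
        φ s.1 γ s.2 = v → s = ⟨γ, v⟩ := by
      rintro ⟨δ, d⟩ γ v h hv
      dsimp only at h
      subst h
      dsimp only at hv
      rw [hid] at hv
      exact congrArg (Sigma.mk δ) hv
    have Lfold : ∀ (l : List (Σ α, Xf α)) (y : Σ α, Xf α),
        (List.foldr G y l).1 = List.foldr (fun s b => meet s.1 b) y.1 l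
        ∧ ∀ γ, meet (List.foldr (fun s b => meet s.1 b) y.1 l) γ = γ →
            φ (List.foldr G y l).1 γ (List.foldr G y l).2
              = List.foldr (fun s b => φ s.1 γ s.2 * b * (e γ)⁻¹) (φ y.1 γ y.2) l := by
      intro l y
      induction l with
      | nil => exact ⟨rfl, fun γ h => rfl⟩
      | cons x l ih =>
        obtain ⟨ih1, ih2⟩ := ih
        constructor
        · show (G x (List.foldr G y l)).1 = meet x.1 (List.foldr (fun s b => meet s.1 b) y.1 l)
          rw [hGxy]
          dsimp only
          rw [ih1]
        · intro γ hγ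
          have hγ0 : meet (meet x.1 (List.foldr (fun s b => meet s.1 b) y.1 l)) γ = γ := hγ
          rw [← ih1] at hγ0
          have hMlγ : meet (List.foldr (fun s b => meet s.1 b) y.1 l) γ = γ := by
            rw [← ih1]
            exact mC _ _ _ (mB _ _) hγ0
          show φ (G x (List.foldr G y l)).1 γ (G x (List.foldr G y l)).2
              = φ x.1 γ x.2 *
                List.foldr (fun s b => φ s.1 γ s.2 * b * (e γ)⁻¹) (φ y.1 γ y.2) l * (e γ)⁻¹
          rw [hGxy x (List.foldr G y l)]
          dsimp only
          rw [hom' _ _ hγ0]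
          have hc1 : φ (meet x.1 (List.foldr G y l).1) γ
              (φ x.1 (meet x.1 (List.foldr G y l).1) x.2) = φ x.1 γ x.2 :=
            congrFun (hcomp x.1 (meet x.1 (List.foldr G y l).1) γ (mA _ _) hγ0) x.2
          have hc2 : φ (meet x.1 (List.foldr G y l).1) γ
              (φ (List.foldr G y l).1 (meet x.1 (List.foldr G y l).1) (List.foldr G y l).2)
              = φ (List.foldr G y l).1 γ (List.foldr G y l).2 :=
            congrFun (hcomp (List.foldr G y l).1 (meet x.1 (List.foldr G y l).1) γ
              (mB _ _) hγ0) (List.foldr G y l).2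
          rw [hc1, hc2, ih2 γ hMlγ]
    refine ⟨G, hGassoc, ?_⟩
    funext t
    rw [hFdef]
    have h1 : nExt (show (1:ℕ) ≤ m + 2 by omega) G t
        = List.foldr G (t ⟨m + 1, by omega⟩)
            (List.ofFn fun i : Fin (m + 1) => t ⟨(i : ℕ), by omega⟩) :=
      NaryBandAux.nExt_eq_foldr _ _ _
    rw [h1]
    have h2 : nExt (show (1:ℕ) ≤ m + 2 by omega) meet (fun i => (t i).1)
        = List.foldr (fun s b => meet s.1 b) (t ⟨m + 1, by omega⟩).1
            (List.ofFn fun i : Fin (m + 1) => t ⟨(i : ℕ), by omega⟩) := by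
      rw [NaryBandAux.nExt_eq_foldr]
      rw [NaryBandAux.ofFn_map (fun s : Σ α, Xf α => s.1)
        (fun i : Fin (m + 1) => t ⟨(i : ℕ), by omega⟩), List.foldr_map]
    rw [h2]
    symm
    refine sigEq2 _ _ _ (Lfold _ _).1 ?_
    rw [(Lfold (List.ofFn fun i : Fin (m + 1) => t ⟨(i : ℕ), by omega⟩)
      (t ⟨m + 1, by omega⟩)).2 _ (hidem _)]
    have h3 : Fa (List.foldr (fun s b => meet s.1 b) (t ⟨m + 1, by omega⟩).1
            (List.ofFn fun i : Fin (m + 1) => t ⟨(i : ℕ), by omega⟩))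
          (fun i => φ (t i).1 _ (t i).2)
        = List.foldr (fun s b => mulA _ (φ s.1 _ s.2) b)
            (φ (t ⟨m + 1, by omega⟩).1 _ (t ⟨m + 1, by omega⟩).2)
            (List.ofFn fun i : Fin (m + 1) => t ⟨(i : ℕ), by omega⟩) := by
      rw [hFaDef, NaryBandAux.nExt_eq_foldr]
      rw [NaryBandAux.ofFn_map (fun s : Σ α, Xf α => φ s.1 _ s.2)
        (fun i : Fin (m + 1) => t ⟨(i : ℕ), by omega⟩), List.foldr_map]
    rw [h3]
    simp only [hmul]
    have hfold' : ∀ (γ : Y) (init : Xf γ) (l : List (Σ α, Xf α)),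
        List.foldr (fun s b => φ s.1 γ s.2 * b * (e γ)⁻¹) init l
          = List.foldr (fun s b => φ s.1 γ s.2 * b) init l * ((e γ)⁻¹) ^ l.length := by
      intro γ init l
      induction l with
      | nil => simp
      | cons x l ih =>
        rw [List.foldr_cons, List.foldr_cons, ih, List.length_cons, pow_succ]
        simp only [mul_assoc]
    rw [hfold', List.length_ofFn, hexp1, mul_one]
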